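/- arXiv:1104.4180 — 2 statements merged into one kernel-verified Lean document; each statement's English description precedes it below -/
import Mathlib

section
/- Let X = {X_j, j ∈ ℤᵈ} be a wide-sense stationary random field with nonnegative covariance function R(m) = cov(X_0, X_m), and suppose Var S(U_n) ∼ ⟨n⟩·L(n) as n → ∞ for some slowly varying function L : ℕᵈ → ℝ \ {0}. Then L(n) ∼ K_X(n) as n → ∞, where K_X(n) = Σ_{−n ≤ j ≤ n} R(j). -/
open MeasureTheory Filter ProbabilityTheory
open scoped Classical BigOperators

/-- Covariance of two real random variables. -/
noncomputable def cov {Ω : Type*} [MeasurableSpace Ω] (μ : Measure Ω) (X Y : Ω → ℝ) : ℝ :=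
  ∫ ω, (X ω - ∫ ω', X ω' ∂μ) * (Y ω - ∫ ω', Y ω' ∂μ) ∂μ

/-- Variance of a real random variable. -/
noncomputable def var {Ω : Type*} [MeasurableSpace Ω] (μ : Measure Ω) (X : Ω → ℝ) : ℝ :=
  cov μ X X

/-- Positive (weak) association of a family of real random variables: for all finite
disjoint index sets and all bounded coordinatewise nondecreasing Lipschitz functions,
the covariance is nonnegative. -/
def PosAssoc {Ω ι : Type*} [MeasurableSpace Ω] (μ : Measure Ω) (X : ι → Ω → ℝ) : Prop :=
  ∀ (I J : Finset ι), Disjoint I J →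
    ∀ (f : (I → ℝ) → ℝ) (g : (J → ℝ) → ℝ),
      Monotone f → Monotone g →
      (∃ K, LipschitzWith K f) → (∃ K, LipschitzWith K g) →
      (∃ C, ∀ y, |f y| ≤ C) → (∃ C, ∀ y, |g y| ≤ C) →
      0 ≤ cov μ (fun ω => f fun i => X i ω) (fun ω => g fun j => X j ω)

/-- `L : ℕ^d → ℝ` is slowly varying at infinity. -/
def SlowlyVarying (d : ℕ) (L : (Fin d → ℕ) → ℝ) : Prop :=
  ∀ a : Fin d → ℕ, (∀ k, 0 < a k) →
    Tendsto (fun x : Fin d → ℕ => L (fun k => a k * x k) / L x) atTop (nhds 1)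

/-- `K : ℕ → ℝ` is slowly varying at infinity. -/
def SlowlyVarying1 (K : ℕ → ℝ) : Prop :=
  ∀ a : ℕ, 0 < a → Tendsto (fun r : ℕ => K (a * r) / K r) atTop (nhds 1)

/-- Uniform integrability of a family of random variables. -/
def UnifInt {Ω ι : Type*} [MeasurableSpace Ω] (μ : Measure Ω) (Y : ι → Ω → ℝ) : Prop :=
  ∀ ε : ℝ, 0 < ε → ∃ c : ℝ, ∀ i, ∫ ω in {ω | c ≤ |Y i ω|}, |Y i ω| ∂μ ≤ ε

/-- Strict stationarity of a random field on ℤ^d. -/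
def StrictStationary {Ω : Type*} [MeasurableSpace Ω] (μ : Measure Ω) {d : ℕ}
    (X : (Fin d → ℤ) → Ω → ℝ) : Prop :=
  ∀ (k : ℕ) (j : Fin k → (Fin d → ℤ)) (u : Fin d → ℤ),
    Measure.map (fun ω (i : Fin k) => X (j i + u) ω) μ =
      Measure.map (fun ω (i : Fin k) => X (j i) ω) μ

/-- The block `U_n = {j ∈ ℤ^d : 1 ≤ j ≤ n}`. -/
noncomputable def blockU {d : ℕ} (n : Fin d → ℕ) : Finset (Fin d → ℤ) :=
  Finset.Icc (fun _ => 1) (fun k => (n k : ℤ))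

/-- Partial sum of the field over the block `U_n`. -/
noncomputable def partialSum {Ω : Type*} {d : ℕ} (X : (Fin d → ℤ) → Ω → ℝ)
    (n : Fin d → ℕ) (ω : Ω) : ℝ :=
  ∑ j ∈ blockU n, X j ω

/-- `K_X(n) = Σ_{-n ≤ j ≤ n} R(j)` (sup-norm blocks). -/
noncomputable def KsumF {d : ℕ} (R : (Fin d → ℤ) → ℝ) (n : Fin d → ℕ) : ℝ :=
  ∑ j ∈ Finset.Icc (fun k => -(n k : ℤ)) (fun k => (n k : ℤ)), R j

/-- `K(r) = Σ_{‖j‖ ≤ r} R(j)` (Euclidean balls). -/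
noncomputable def Keucl {d : ℕ} (R : (Fin d → ℤ) → ℝ) (r : ℕ) : ℝ :=
  ∑ j ∈ (Finset.Icc (fun _ => -(r : ℤ)) (fun _ => (r : ℤ))).filter
      (fun j => Real.sqrt (∑ k, ((j k : ℝ)) ^ 2) ≤ (r : ℝ)), R j

private lemma var_partialSum {Ω : Type*} [MeasurableSpace Ω] (μ : Measure Ω) [IsProbabilityMeasure μ]
    {d : ℕ} (X : (Fin d → ℤ) → Ω → ℝ) (hL2 : ∀ j, MemLp (X j) 2 μ) (n : Fin d → ℕ) :
    var μ (partialSum X n) = ∑ i ∈ blockU n, ∑ j ∈ blockU n, cov μ (X i) (X j) := by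
  classical
  set c : (Fin d → ℤ) → ℝ := fun j => ∫ ω, X j ω ∂μ with hc
  have hY : ∀ j, MemLp (fun ω => X j ω - c j) 2 μ := fun j => (hL2 j).sub (memLp_const _)
  have hint : ∀ i j, Integrable (fun ω => (X i ω - c i) * (X j ω - c j)) μ := by
    intro i j
    have h1 : (1 : ENNReal)/1 = 1/2 + 1/2 := by rw [ENNReal.div_add_div_same]; norm_num [ENNReal.div_self]
    haveI : ENNReal.HolderTriple (2 : ENNReal) 2 1 := ⟨by rw [ENNReal.inv_two_add_inv_two, inv_one]⟩
    exact (hY i).integrable_mul (hY j)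
  have hES : ∫ ω, partialSum X n ω ∂μ = ∑ j ∈ blockU n, c j := by
    simp only [partialSum]
    exact integral_finset_sum _ fun j _ => (hL2 j).integrable one_le_two
  unfold var cov
  rw [hES]
  have hfun : (fun ω => (partialSum X n ω - ∑ j ∈ blockU n, c j) *
        (partialSum X n ω - ∑ j ∈ blockU n, c j))
      = fun ω => ∑ i ∈ blockU n, ∑ j ∈ blockU n, (X i ω - c i) * (X j ω - c j) := by
    funext ω
    simp only [partialSum]
    rw [← Finset.sum_sub_distrib, Finset.sum_mul_sum]
  rw [hfun, integral_finset_sum _ fun i _ => integrable_finset_sum _ fun j _ => hint i j]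
  refine Finset.sum_congr rfl fun i _ => ?_
  rw [integral_finset_sum _ fun j _ => hint i j]

private lemma sum_UB {d : ℕ} (R : (Fin d → ℤ) → ℝ) (hR : ∀ m, 0 ≤ R m) (n : Fin d → ℕ) :
    ∑ i ∈ blockU n, ∑ j ∈ blockU n, R (i - j) ≤ (∏ k, (n k : ℝ)) * KsumF R n := by
  classical
  have hcard : (blockU n).card = ∏ k, n k := by
    rw [blockU, Pi.card_Icc]
    refine Finset.prod_congr rfl fun k _ => ?_
    rw [Int.card_Icc]; omega
  have hinner : ∀ i ∈ blockU n, ∑ j ∈ blockU n, R (i - j) ≤ KsumF R n := by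
    intro i hi
    rw [blockU, Finset.mem_Icc] at hi
    have himg : ∑ j ∈ blockU n, R (i - j)
        = ∑ m ∈ (blockU n).image (fun j => i - j), R m := by
      rw [Finset.sum_image]
      intro a _ b _ h
      exact sub_right_injective h
    rw [himg]
    apply Finset.sum_le_sum_of_subset_of_nonneg
    · intro m hm
      simp only [Finset.mem_image] at hm
      obtain ⟨j, hj, rfl⟩ := hm
      rw [blockU, Finset.mem_Icc] at hj
      rw [Finset.mem_Icc]
      have h1 : ∀ t, (1:ℤ) ≤ i t := fun t => hi.1 t
      have h2 : ∀ t, i t ≤ (n t : ℤ) := fun t => hi.2 t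
      have h3 : ∀ t, (1:ℤ) ≤ j t := fun t => hj.1 t
      have h4 : ∀ t, j t ≤ (n t : ℤ) := fun t => hj.2 t
      constructor <;> intro t
      · show -(n t : ℤ) ≤ i t - j t
        have := h1 t; have := h2 t; have := h3 t; have := h4 t; omega
      · show i t - j t ≤ (n t : ℤ)
        have := h1 t; have := h2 t; have := h3 t; have := h4 t; omega
    · exact fun m _ _ => hR m
  calc ∑ i ∈ blockU n, ∑ j ∈ blockU n, R (i - j) ≤ ∑ _i ∈ blockU n, KsumF R n :=
        Finset.sum_le_sum hinner
    _ = (blockU n).card • KsumF R n := Finset.sum_const _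
    _ = (∏ k, (n k : ℝ)) * KsumF R n := by
        rw [hcard, nsmul_eq_mul]; push_cast; ring

lemma sum_LB {d : ℕ} (R : (Fin d → ℤ) → ℝ) (hR : ∀ m, 0 ≤ R m) (k : ℕ) (hk : 3 ≤ k)
    (n : Fin d → ℕ) :
    (((k - 2 : ℕ) : ℝ))^d * (∏ t, (n t : ℝ)) * KsumF R n ≤
      ∑ i ∈ blockU (fun t => k * n t), ∑ j ∈ blockU (fun t => k * n t), R (i - j) := by
  classical
  set V : Finset (Fin d → ℤ) :=
    Finset.Icc (fun t => (n t : ℤ) + 1) (fun t => (n t : ℤ) + ((k - 2) * n t : ℕ)) with hV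
  set M : Finset (Fin d → ℤ) :=
    Finset.Icc (fun t => -(n t : ℤ)) (fun t => (n t : ℤ)) with hM
  have hcast2 : ((k - 2 : ℕ) : ℤ) = (k : ℤ) - 2 := by omega
  have hcardV : V.card = ∏ t, (k - 2) * n t := by
    rw [hV, Pi.card_Icc]
    refine Finset.prod_congr rfl fun t _ => ?_
    rw [Int.card_Icc,
      show (n t : ℤ) + ((k - 2) * n t : ℕ) + 1 - ((n t : ℤ) + 1) = (((k - 2) * n t : ℕ) : ℤ) by
        ring,
      Int.toNat_natCast]
  have key : ∑ q ∈ V ×ˢ M, R q.2 ≤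
      ∑ p ∈ (blockU (fun t => k * n t)) ×ˢ (blockU (fun t => k * n t)), R (p.1 - p.2) := by
    have himg : ∑ q ∈ V ×ˢ M, R q.2
        = ∑ p ∈ (V ×ˢ M).image (fun q => (q.1 + q.2, q.1)), R (p.1 - p.2) := by
      rw [Finset.sum_image]
      · exact Finset.sum_congr rfl fun q _ => by simp
      · intro a _ b _ h
        have h2 : a.1 = b.1 := congrArg Prod.snd h
        have h1 : a.1 + a.2 = b.1 + b.2 := congrArg Prod.fst h
        have h3 : a.2 = b.2 := by rw [h2] at h1; exact add_left_cancel h1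
        exact Prod.ext h2 h3
    rw [himg]
    apply Finset.sum_le_sum_of_subset_of_nonneg
    · intro p hp
      simp only [Finset.mem_image] at hp
      obtain ⟨q, hq, rfl⟩ := hp
      rw [Finset.mem_product] at hq
      obtain ⟨hq1, hq2⟩ := hq
      rw [hV, Finset.mem_Icc] at hq1
      rw [hM, Finset.mem_Icc] at hq2
      rw [Finset.mem_product]
      have hmul : ∀ t, ((k * n t : ℕ) : ℤ) = (((k-2) * n t : ℕ) : ℤ) + 2 * (n t : ℤ) := by
        intro t
        push_cast [Nat.sub_mul]
        have h2k : (2:ℤ) * n t ≤ (k:ℤ) * n t := by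
          have : (2:ℕ) * n t ≤ k * n t := Nat.mul_le_mul_right _ (by omega)
          exact_mod_cast this
        omega
      have h1 : ∀ t, (n t : ℤ) + 1 ≤ q.1 t := fun t => hq1.1 t
      have h2 : ∀ t, q.1 t ≤ (n t : ℤ) + (((k-2) * n t : ℕ) : ℤ) := fun t => hq1.2 t
      have h3 : ∀ t, -(n t : ℤ) ≤ q.2 t := fun t => hq2.1 t
      have h4 : ∀ t, q.2 t ≤ (n t : ℤ) := fun t => hq2.2 t
      constructor <;> (rw [blockU, Finset.mem_Icc]; constructor <;> intro t)
      · show (1:ℤ) ≤ q.1 t + q.2 t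
        have := h1 t; have := h3 t; omega
      · show q.1 t + q.2 t ≤ ((k * n t : ℕ) : ℤ)
        have := h2 t; have := h4 t; have := hmul t; omega
      · show (1:ℤ) ≤ q.1 t
        have := h1 t; have : (0:ℤ) ≤ n t := Int.natCast_nonneg _; omega
      · show q.1 t ≤ ((k * n t : ℕ) : ℤ)
        have := h2 t; have := hmul t; have : (0:ℤ) ≤ n t := Int.natCast_nonneg _; omega
    · exact fun m _ _ => hR _
  have hsum : ∑ q ∈ V ×ˢ M, R q.2 = (V.card : ℝ) * KsumF R n := by
    rw [Finset.sum_product]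
    simp [KsumF, hM, Finset.sum_const, nsmul_eq_mul]
  have hlhs : (((k - 2 : ℕ) : ℝ))^d * (∏ t, (n t : ℝ)) = (V.card : ℝ) := by
    rw [hcardV]
    push_cast
    rw [Finset.prod_mul_distrib, Finset.prod_const, Finset.card_univ, Fintype.card_fin]
  calc (((k - 2 : ℕ) : ℝ))^d * (∏ t, (n t : ℝ)) * KsumF R n
      = (V.card : ℝ) * KsumF R n := by rw [hlhs]
    _ = ∑ q ∈ V ×ˢ M, R q.2 := hsum.symm
    _ ≤ _ := key.trans (le_of_eq (Finset.sum_product _ _ _))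

private lemma tendsto_ratio (d : ℕ) :
    Tendsto (fun k : ℕ => ((k:ℝ)/((k:ℝ)-2))^d) atTop (nhds 1) := by
  have h2 : Tendsto (fun k : ℕ => (k:ℝ) - 2) atTop atTop :=
    tendsto_atTop_add_const_right _ _ tendsto_natCast_atTop_atTop
  have h3 : Tendsto (fun k : ℕ => 1 + 2/((k:ℝ)-2)) atTop (nhds (1 + 2 * 0)) := by
    have := h2.inv_tendsto_atTop
    simpa [div_eq_mul_inv] using tendsto_const_nhds.add (tendsto_const_nhds.mul this)
  have h4 : Tendsto (fun k : ℕ => (k:ℝ)/((k:ℝ)-2)) atTop (nhds 1) := by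
    have h5 : Tendsto (fun k : ℕ => 1 + 2/((k:ℝ)-2)) atTop (nhds 1) := by simpa using h3
    apply h5.congr'
    filter_upwards [eventually_ge_atTop 3] with k hk
    have hk2 : (k:ℝ) - 2 ≠ 0 := by
      have : (3:ℝ) ≤ k := by exact_mod_cast hk
      intro h; linarith
    field_simp
    ring
  simpa using h4.pow d

/-- if `Var S(U_n) ∼ ⟨n⟩ L(n)` for some slowly varying `L`, then
`L(n) ∼ K_X(n)` as `n → ∞`. -/
theorem stmt3 {Ω : Type*} [MeasurableSpace Ω] (μ : Measure Ω) [IsProbabilityMeasure μ]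
    {d : ℕ} (X : (Fin d → ℤ) → Ω → ℝ) (R : (Fin d → ℤ) → ℝ)
    (hmeas : ∀ j, Measurable (X j)) (hL2 : ∀ j, MemLp (X j) 2 μ)
    (hcov : ∀ i j, cov μ (X i) (X j) = R (i - j)) (hR : ∀ m, 0 ≤ R m)
    (L : (Fin d → ℕ) → ℝ) (hL0 : ∀ x, L x ≠ 0) (hsv : SlowlyVarying d L)
    (hvar : Tendsto (fun n : Fin d → ℕ =>
        var μ (partialSum X n) / ((∏ k, (n k : ℝ)) * L n)) atTop (nhds 1)) :
    Tendsto (fun n : Fin d → ℕ => L n / KsumF R n) atTop (nhds 1) := by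
  classical
  set σ : (Fin d → ℕ) → ℝ := fun n => ∑ i ∈ blockU n, ∑ j ∈ blockU n, R (i - j) with hσdef
  set P : (Fin d → ℕ) → ℝ := fun n => ∏ t, (n t : ℝ) with hPdef
  have hσvar : ∀ n, var μ (partialSum X n) = σ n := by
    intro n
    rw [var_partialSum μ X hL2 n]
    exact Finset.sum_congr rfl fun i _ => Finset.sum_congr rfl fun j _ => hcov i j
  have hvarσ : Tendsto (fun n => σ n / (P n * L n)) atTop (nhds 1) :=
    hvar.congr fun n => by rw [hσvar n]
  have hσ0 : ∀ n, 0 ≤ σ n := fun n =>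
    Finset.sum_nonneg fun i _ => Finset.sum_nonneg fun j _ => hR _
  have hK0 : ∀ n, 0 ≤ KsumF R n := fun n => Finset.sum_nonneg fun m _ => hR m
  have hposev : ∀ᶠ n : Fin d → ℕ in atTop, 0 < P n ∧ 0 < L n := by
    filter_upwards [eventually_ge_atTop (fun _ => 1 : Fin d → ℕ),
      hvarσ.eventually (lt_mem_nhds (by norm_num : (0:ℝ) < 1))] with n h1 h2
    have hP : 0 < P n := Finset.prod_pos fun t _ => by
      have : (1:ℕ) ≤ n t := h1 t
      exact_mod_cast Nat.lt_of_lt_of_le Nat.zero_lt_one this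
    refine ⟨hP, ?_⟩
    have hPL : 0 < P n * L n := by
      by_contra h
      push_neg at h
      have : σ n / (P n * L n) ≤ 0 := div_nonpos_of_nonneg_of_nonpos (hσ0 n) h
      linarith
    rcases mul_pos_iff.1 hPL with ⟨_, h⟩ | ⟨h, _⟩
    · exact h
    · linarith
  have hKL : Tendsto (fun n => KsumF R n / L n) atTop (nhds 1) := by
    rw [tendsto_order]
    constructor
    · intro b hb
      filter_upwards [hposev, hvarσ.eventually (lt_mem_nhds hb)] with n hpos h2
      have hPL : 0 < P n * L n := mul_pos hpos.1 hpos.2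
      calc b < σ n / (P n * L n) := h2
        _ ≤ (P n * KsumF R n) / (P n * L n) :=
            (div_le_div_iff_of_pos_right hPL).2 (sum_UB R hR n)
        _ = KsumF R n / L n := mul_div_mul_left _ _ (ne_of_gt hpos.1)
    · intro b hb
      obtain ⟨k, hk3, hckb⟩ : ∃ k : ℕ, 3 ≤ k ∧ ((k:ℝ)/((k:ℝ)-2))^d < b := by
        rcases (((tendsto_ratio d).eventually (gt_mem_nhds hb)).and
          (eventually_ge_atTop 3)).exists with ⟨k, h1, h2⟩
        exact ⟨k, h2, h1⟩
      set kn : (Fin d → ℕ) → (Fin d → ℕ) := fun n t => k * n t with hknd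
      have htk : Tendsto kn atTop atTop := by
        apply tendsto_atTop_mono (f := fun n : Fin d → ℕ => n) _ tendsto_id
        intro n t
        exact Nat.le_mul_of_pos_left _ (by omega)
      have hg : Tendsto (fun n => σ (kn n) / (P (kn n) * L (kn n))) atTop (nhds 1) :=
        hvarσ.comp htk
      have hh : Tendsto (fun n => L (kn n) / L n) atTop (nhds 1) := by
        have := hsv (fun _ => k) (fun _ => show 0 < k by omega)
        simpa using this
      have hk2 : (0:ℝ) < (k:ℝ) - 2 := by
        have : (3:ℝ) ≤ k := by exact_mod_cast hk3
        linarith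
      have hprod : Tendsto (fun n =>
          ((k:ℝ)/((k:ℝ)-2))^d * (σ (kn n) / (P (kn n) * L (kn n))) * (L (kn n) / L n))
          atTop (nhds (((k:ℝ)/((k:ℝ)-2))^d * 1 * 1)) :=
        (tendsto_const_nhds.mul hg).mul hh
      have hcb : ((k:ℝ)/((k:ℝ)-2))^d * 1 * 1 < b := by simpa using hckb
      filter_upwards [hposev, htk.eventually hposev, hprod.eventually (gt_mem_nhds hcb)]
        with n hpos hposk hlt
      have hPn := hpos.1
      have hLn := hpos.2
      have hPk := hposk.1
      have hLk := hposk.2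
      have hcast : ((k - 2 : ℕ) : ℝ) = (k:ℝ) - 2 := by
        have h2k : (2:ℕ) ≤ k := by omega
        push_cast [Nat.cast_sub h2k]
        ring
      have hLB' : ((k:ℝ) - 2)^d * P n * KsumF R n ≤ σ (kn n) := by
        have := sum_LB R hR k hk3 n
        rw [hcast] at this
        exact this
      have hPk_eq : P (kn n) = (k:ℝ)^d * P n := by
        simp only [hPdef, hknd]
        push_cast
        rw [Finset.prod_mul_distrib, Finset.prod_const, Finset.card_univ, Fintype.card_fin]
      have hc2 : (0:ℝ) < ((k:ℝ)-2)^d * P n * L n :=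
        mul_pos (mul_pos (pow_pos hk2 d) hPn) hLn
      have step1 : KsumF R n / L n ≤ σ (kn n) / (((k:ℝ)-2)^d * P n * L n) := by
        rw [div_le_div_iff₀ hLn hc2]
        nlinarith [mul_le_mul_of_nonneg_right hLB' hLn.le]
      have step2 : σ (kn n) / (((k:ℝ)-2)^d * P n * L n)
          = ((k:ℝ)/((k:ℝ)-2))^d * (σ (kn n) / (P (kn n) * L (kn n))) * (L (kn n) / L n) := by
        rw [hPk_eq, div_pow]
        have hkpos : (0:ℝ) < (k:ℝ) := by
          have : (3:ℝ) ≤ (k:ℝ) := by exact_mod_cast hk3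
          linarith
        field_simp
      exact lt_of_le_of_lt (step1.trans_eq step2) hlt
  have hfin : Tendsto (fun n => (KsumF R n / L n)⁻¹) atTop (nhds 1⁻¹) :=
    hKL.inv₀ one_ne_zero
  simpa [inv_div] using hfin
end

section
/- Let X = {X_j, j ∈ ℤᵈ} be a wide-sense stationary random field with nonnegative covariance function R(m) = cov(X_0, X_m). Then for every c ∈ (0,1) and every n ∈ ℕᵈ with n ≥ (1/(1−c))·(1,…,1) (so that c·n ≤ n − 1 coordinatewise), one has Var S(U_n) ≥ (1−c)ᵈ · ⟨n⟩ · K_X(⌊cn⌋), where K_X(m) = Σ_{−m ≤ j ≤ m} R(j) and ⌊cn⌋ denotes the coordinatewise integer part of (cn₁,…,cn_d). -/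
open MeasureTheory Filter ProbabilityTheory
open scoped Classical BigOperators
open scoped ENNReal

lemma var_sum_eq {Ω : Type*} [MeasurableSpace Ω] (μ : Measure Ω) [IsProbabilityMeasure μ]
    {ι : Type*} (s : Finset ι) (X : ι → Ω → ℝ) (hL2 : ∀ i, MemLp (X i) 2 μ) :
    var μ (fun ω => ∑ j ∈ s, X j ω) = ∑ i ∈ s, ∑ j ∈ s, cov μ (X i) (X j) := by
  classical
  set Y : ι → Ω → ℝ := fun i ω => X i ω - ∫ ω', X i ω' ∂μ with hY
  have hY2 : ∀ i, MemLp (Y i) 2 μ := fun i => (hL2 i).sub (memLp_const _)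
  have h12 : (1 : ℝ≥0∞) / 1 = 1 / 2 + 1 / 2 := by
    rw [ENNReal.div_add_div_same, one_div_one, one_add_one_eq_two]
    exact (ENNReal.div_self two_ne_zero ENNReal.ofNat_ne_top).symm
  have hint : ∀ i j, Integrable (fun ω => Y i ω * Y j ω) μ := by
    intro i j
    rw [← memLp_one_iff_integrable]
    have h := (hY2 j).smul (r := 1) (hY2 i)
    exact h
  have hES : ∫ ω, (∑ j ∈ s, X j ω) ∂μ = ∑ j ∈ s, ∫ ω, X j ω ∂μ :=
    integral_finset_sum s (fun i _ => (hL2 i).integrable one_le_two)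
  have step : var μ (fun ω => ∑ j ∈ s, X j ω)
      = ∫ ω, ∑ i ∈ s, ∑ j ∈ s, Y i ω * Y j ω ∂μ := by
    unfold var cov
    congr 1
    funext ω
    rw [hES, ← Finset.sum_sub_distrib, Finset.sum_mul_sum]
  rw [step, integral_finset_sum s (fun i _ => integrable_finset_sum s (fun j _ => hint i j))]
  exact Finset.sum_congr rfl fun i _ => integral_finset_sum s (fun j _ => hint i j)

/-- for `c ∈ (0,1)` and `n ≥ (1/(1-c))·1`,
`Var S(U_n) ≥ (1-c)^d ⟨n⟩ K_X(⌊cn⌋)`. -/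
theorem stmt5 {Ω : Type*} [MeasurableSpace Ω] (μ : Measure Ω) [IsProbabilityMeasure μ]
    {d : ℕ} (X : (Fin d → ℤ) → Ω → ℝ) (R : (Fin d → ℤ) → ℝ)
    (hmeas : ∀ j, Measurable (X j)) (hL2 : ∀ j, MemLp (X j) 2 μ)
    (hcov : ∀ i j, cov μ (X i) (X j) = R (i - j)) (hR : ∀ m, 0 ≤ R m) :
    ∀ c : ℝ, 0 < c → c < 1 → ∀ n : Fin d → ℕ, (∀ k, 1 / (1 - c) ≤ (n k : ℝ)) →
      (1 - c) ^ d * (∏ k, (n k : ℝ)) * KsumF R (fun k => ⌊c * (n k : ℝ)⌋₊) ≤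
        var μ (partialSum X n) := by
  classical
  intro c hc0 hc1 n hn
  have hc1' : (0:ℝ) < 1 - c := by linarith
  have hn0 : ∀ k, (0:ℝ) < (n k : ℝ) := by
    intro k
    have := hn k
    have h1 : (0:ℝ) < 1 / (1 - c) := by positivity
    linarith
  set M : Fin d → ℕ := fun k => ⌊c * (n k : ℝ)⌋₊ with hM
  have hMc : ∀ k, (M k : ℝ) ≤ c * (n k : ℝ) := fun k =>
    Nat.floor_le (by have := (hn0 k).le; positivity)
  set I : Finset (Fin d → ℤ) := Finset.Icc (fun k => -(M k : ℤ)) (fun k => (M k : ℤ)) with hI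
  set U : Finset (Fin d → ℤ) := blockU n with hU
  -- variance identity
  have hkey : var μ (partialSum X n) = ∑ i ∈ U, ∑ j ∈ U, R (i - j) := by
    have := var_sum_eq μ U X hL2
    rw [show partialSum X n = (fun ω => ∑ j ∈ U, X j ω) from rfl, this]
    exact Finset.sum_congr rfl fun i _ => Finset.sum_congr rfl fun j _ => hcov i j
  -- the shifted window
  set W : (Fin d → ℤ) → Finset (Fin d → ℤ) := fun m =>
    Finset.Icc (fun k => max 1 (1 - m k)) (fun k => min ((n k : ℤ)) ((n k : ℤ) - m k)) with hW
  -- bounds on m for m ∈ I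
  have hmI : ∀ m ∈ I, ∀ k, |(m k : ℝ)| ≤ c * (n k : ℝ) := by
    intro m hm k
    rw [hI, Finset.mem_Icc] at hm
    have h1 := hm.1 k
    have h2 := hm.2 k
    have : |m k| ≤ (M k : ℤ) := abs_le.2 ⟨by simpa using h1, h2⟩
    calc |(m k : ℝ)| = ((|m k| : ℤ) : ℝ) := by push_cast; ring
    _ ≤ (M k : ℝ) := by exact_mod_cast this
    _ ≤ c * n k := hMc k
  -- cardinality lower bound
  have hcard : ∀ m ∈ I, (1 - c) ^ d * (∏ k, (n k : ℝ)) ≤ ((W m).card : ℝ) := by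
    intro m hm
    have hcardeq : (W m).card = ∏ k, ((min ((n k : ℤ)) ((n k : ℤ) - m k) + 1
        - max 1 (1 - m k)).toNat) := by
      rw [hW, Pi.card_Icc]
      exact Finset.prod_congr rfl fun k _ => Int.card_Icc _ _
    rw [hcardeq]
    push_cast
    rw [show (1 - c) ^ d * (∏ k, (n k : ℝ)) = ∏ k : Fin d, ((1 - c) * (n k : ℝ)) by
      rw [Finset.prod_mul_distrib, Finset.prod_const, Finset.card_univ, Fintype.card_fin]]
    apply Finset.prod_le_prod
    · intro k _
      have := (hn0 k).le
      positivity
    · intro k _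
      have habs := hmI m hm k
      have hint : ((min ((n k : ℤ)) ((n k : ℤ) - m k) + 1 - max 1 (1 - m k) : ℤ) : ℝ)
          ≤ (((min ((n k : ℤ)) ((n k : ℤ) - m k) + 1 - max 1 (1 - m k)).toNat : ℕ) : ℝ) := by
        exact_mod_cast Int.self_le_toNat _
      refine le_trans ?_ hint
      rcases le_or_gt 0 (m k) with hmk | hmk
      · have h1 : min ((n k : ℤ)) ((n k : ℤ) - m k) = (n k : ℤ) - m k := by omega
        have h2 : max 1 (1 - m k) = 1 := by omega
        rw [h1, h2]
        push_cast
        have : |(m k : ℝ)| = (m k : ℝ) := abs_of_nonneg (by exact_mod_cast hmk)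
        nlinarith [hn0 k]
      · have h1 : min ((n k : ℤ)) ((n k : ℤ) - m k) = (n k : ℤ) := by omega
        have h2 : max 1 (1 - m k) = 1 - m k := by omega
        rw [h1, h2]
        push_cast
        have : |(m k : ℝ)| = -(m k : ℝ) := abs_of_neg (by exact_mod_cast hmk)
        nlinarith [hn0 k]
  -- injection of (m, j) pairs into U × U
  set φ : (Σ _ : (Fin d → ℤ), (Fin d → ℤ)) → (Fin d → ℤ) × (Fin d → ℤ) :=
    fun x => (x.2 + x.1, x.2) with hφ
  have hWmem : ∀ x ∈ I.sigma W, φ x ∈ U ×ˢ U := by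
    intro x hx
    rw [Finset.mem_sigma] at hx
    obtain ⟨hx1, hx2⟩ := hx
    rw [hW, Finset.mem_Icc] at hx2
    have ha := hx2.1
    have hb := hx2.2
    rw [Finset.mem_product]
    constructor
    · rw [hU, blockU, Finset.mem_Icc]
      constructor
      · intro k
        have h1 := ha k
        have h2 := hb k
        simp only [hφ, Pi.add_apply]
        simp only [le_max_iff, max_le_iff, le_min_iff, min_le_iff] at *
        omega
      · intro k
        have h1 := ha k
        have h2 := hb k
        simp only [hφ, Pi.add_apply]
        simp only [le_max_iff, max_le_iff, le_min_iff, min_le_iff] at *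
        omega
    · rw [hU, blockU, Finset.mem_Icc]
      constructor
      · intro k
        have h1 := ha k
        simp only [hφ]
        simp only [le_max_iff, max_le_iff] at *
        omega
      · intro k
        have h2 := hb k
        simp only [hφ]
        simp only [le_min_iff, min_le_iff] at *
        omega
  have hinj : ∀ x ∈ I.sigma W, ∀ y ∈ I.sigma W, φ x = φ y → x = y := by
    intro x _ y _ hxy
    rw [hφ, Prod.mk.injEq] at hxy
    obtain ⟨h1, h2⟩ := hxy
    have hfst : x.1 = y.1 := by
      have := h1
      rw [h2] at this
      exact add_left_cancel this
    exact Sigma.ext hfst (heq_of_eq (by exact h2))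
  -- chain of inequalities
  have hsum1 : ∑ m ∈ I, ((W m).card : ℝ) * R m ≤ ∑ i ∈ U, ∑ j ∈ U, R (i - j) := by
    have e1 : ∑ m ∈ I, ((W m).card : ℝ) * R m = ∑ x ∈ I.sigma W, R x.1 := by
      rw [Finset.sum_sigma]
      exact Finset.sum_congr rfl fun m _ => by
        simp [nsmul_eq_mul]
    have e2 : ∑ x ∈ I.sigma W, R x.1
        = ∑ p ∈ (I.sigma W).image φ, R (p.1 - p.2) := by
      rw [Finset.sum_image hinj]
      exact Finset.sum_congr rfl fun x _ => by
        rw [hφ]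
        simp
    rw [e1, e2, ← Finset.sum_product']
    exact Finset.sum_le_sum_of_subset_of_nonneg
      (fun p hp => by
        obtain ⟨x, hx, rfl⟩ := Finset.mem_image.1 hp
        exact hWmem x hx)
      (fun p _ _ => hR _)
  have hsum2 : (1 - c) ^ d * (∏ k, (n k : ℝ)) * KsumF R M
      ≤ ∑ m ∈ I, ((W m).card : ℝ) * R m := by
    rw [KsumF, ← hI, Finset.mul_sum]
    exact Finset.sum_le_sum fun m hm =>
      mul_le_mul_of_nonneg_right (hcard m hm) (hR m)
  rw [hkey]
  calc (1 - c) ^ d * (∏ k, (n k : ℝ)) * KsumF R (fun k => ⌊c * (n k : ℝ)⌋₊)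
      = (1 - c) ^ d * (∏ k, (n k : ℝ)) * KsumF R M := by rw [hM]
    _ ≤ ∑ m ∈ I, ((W m).card : ℝ) * R m := hsum2
    _ ≤ ∑ i ∈ U, ∑ j ∈ U, R (i - j) := hsum1
end
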